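/- For every λ = (λ₁,…,λ₇) ∈ ℝ⁷, the 3×3 Hermitian matrix ∑_{j=1}^7 λ_j A_j is not positive definite. Consequently, the codimension-7 quadric M ⊂ ℂ^{10} defined by the matrices A₁,…,A₇ is not strongly pseudoconvex at 0. -/

import Mathlib

open Complex
open scoped ComplexOrder

noncomputable section

/-- The seven `3 × 3` Hermitian matrices defining the codimension-7 quadric `M ⊂ ℂ¹⁰`. -/
def quadricA : Fin 7 → Matrix (Fin 3) (Fin 3) ℂ
  | 0 => !![1, 0, 0; 0, 1, 0; 0, 0, -1]
  | 1 => !![1, 0, 0; 0, -1, 0; 0, 0, 0]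
  | 2 => !![0, 0, 0; 0, 0, 1; 0, 1, 0]
  | 3 => !![0, 1, 0; 1, 0, 0; 0, 0, 0]
  | 4 => !![0, 0, I; 0, 0, 0; -I, 0, 0]
  | 5 => !![0, 0, 0; 0, 0, I; 0, -I, 0]
  | 6 => !![0, I, 0; -I, 0, 0; 0, 0, 0]

/-- no real linear combination of the matrices `A₁, …, A₇` is positive
definite; hence the codimension-7 quadric `M ⊂ ℂ¹⁰` is not strongly pseudoconvex at `0`. -/
theorem quadric_not_strongly_pseudoconvex :
    ∀ lam : Fin 7 → ℝ, ¬ (∑ j, (lam j : ℂ) • quadricA j).PosDef := by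
  intro lam h
  have key : ∀ i : Fin 3,
      0 < dotProduct (star (Pi.single i 1 : Fin 3 → ℂ))
        ((∑ j, (lam j : ℂ) • quadricA j).mulVec (Pi.single i 1)) := by
    intro i
    exact h.dotProduct_mulVec_pos (x := Pi.single i 1) (by simp [Pi.single_eq_same, Function.ne_iff])
  have h0 := key 0
  have h1 := key 1
  have h2 := key 2
  simp only [Fin.sum_univ_seven, quadricA, Matrix.add_mulVec, Matrix.smul_mulVec,
    Matrix.mulVec_single, dotProduct] at h0 h1 h2
  norm_num [Fin.sum_univ_three, Pi.single_apply, Matrix.cons_val_zero, Matrix.cons_val_one, Matrix.cons_val_two] at h0 h1 h2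
  rw [show ((lam 0 : ℂ) + lam 1) = ((lam 0 + lam 1 : ℝ) : ℂ) by push_cast; ring] at h0
  rw [show (0:ℂ) = ((0:ℝ):ℂ) by norm_num] at h0 h2
  rw [Complex.real_lt_real] at h0 h2
  linarith
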